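/- Let U ⊆ ℝ^N be an open set, Γ^α_{λβ} : U → ℝ continuous connection coefficients, and z : I → U a twice differentiable curve on an open interval I satisfying δż^α/dt := z̈^α + ∑_{λ,β} Γ^α_{λβ}(z) ż^λ ż^β = a(t) ż^α for a continuous function a : I → ℝ. Then z is geodesic up to reparametrization: there exist an open interval J and a twice differentiable function φ : J → I with φ' > 0 such that the curve w = z ∘ φ satisfies the geodesic equation ẅ^α(q) + ∑_{λ,β} Γ^α_{λβ}(w(q)) ẇ^λ(q) ẇ^β(q) = 0 for all q ∈ J. -/

import Mathlib

open Set Filter intervalIntegral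
open scoped Topology

/-- If a curve `z` satisfies `δż/dt = a(t) ż` (its tangential
direction is transferred parallelly), then `z` is a geodesic up to
reparametrization: there is an open interval `J` and an orientation-preserving
twice differentiable change of parameter `φ : J → I` such that `w = z ∘ φ`
satisfies the geodesic equation. -/
theorem stmt_13 {N : ℕ} (U : Set (Fin N → ℝ)) (hUopen : IsOpen U)
    (Γ : (Fin N → ℝ) → Fin N → Fin N → Fin N → ℝ)   -- Γ z α λ β = Γ^α_{λβ}(z)
    (hΓcont : ∀ α μ β, ContinuousOn (fun z => Γ z α μ β) U)
    (I : Set ℝ) (hIopen : IsOpen I) (hIconn : IsPreconnected I)  -- open interval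
    (z : ℝ → Fin N → ℝ)
    (hz1 : ∀ t ∈ I, DifferentiableAt ℝ z t)
    (hz2 : ∀ t ∈ I, DifferentiableAt ℝ (deriv z) t)
    (hmem : ∀ t ∈ I, z t ∈ U)
    (a : ℝ → ℝ) (ha : ContinuousOn a I)
    (hpar : ∀ t ∈ I, ∀ α, deriv (fun s => deriv z s α) t
      + ∑ μ, ∑ β, Γ (z t) α μ β * deriv z t μ * deriv z t β = a t * deriv z t α) :
    ∃ (J : Set ℝ) (φ : ℝ → ℝ), IsOpen J ∧ IsPreconnected J ∧
      Set.BijOn φ J I ∧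
      (∀ q ∈ J, DifferentiableAt ℝ φ q ∧ DifferentiableAt ℝ (deriv φ) q ∧ 0 < deriv φ q) ∧
      (∀ q ∈ J, ∀ α,
        deriv (fun s => deriv (fun r => z (φ r) α) s) q
          + ∑ μ, ∑ β, Γ (z (φ q)) α μ β * deriv (fun r => z (φ r) μ) q *
              deriv (fun r => z (φ r) β) q = 0) := by
  rcases I.eq_empty_or_nonempty with hI | ⟨t0, ht0⟩
  · subst hI
    exact ⟨∅, id, isOpen_empty, isPreconnected_empty,
      ⟨fun q hq => hq.elim, fun q hq _ => hq.elim, fun q hq => hq.elim⟩,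
      fun q hq => hq.elim, fun q hq => hq.elim⟩
  -- the interval `I` is convex
  have hIconv : Convex ℝ I := convex_iff_ordConnected.2 hIconn.ordConnected
  have hsub : ∀ t ∈ I, uIcc t0 t ⊆ I := fun t ht => hIconn.ordConnected.uIcc_subset ht0 ht
  -- antiderivative of `a`
  set A : ℝ → ℝ := fun t => ∫ u in t0..t, a u with hAdef
  have hA : ∀ t ∈ I, HasDerivAt A (a t) t := by
    intro t ht
    exact integral_hasDerivAt_right ((ha.mono (hsub t ht)).intervalIntegrable)
      (ha.stronglyMeasurableAtFilter hIopen t ht) (ha.continuousAt (hIopen.mem_nhds ht))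
  -- the integrating factor `E = exp A`
  set E : ℝ → ℝ := fun t => Real.exp (A t) with hEdef
  have hEpos : ∀ t, 0 < E t := fun t => Real.exp_pos _
  have hEcont : ∀ t ∈ I, ContinuousAt E t := fun t ht =>
    Real.continuous_exp.continuousAt.comp (hA t ht).continuousAt
  have hEcontOn : ContinuousOn E I := fun t ht => (hEcont t ht).continuousWithinAt
  -- the reparametrizing function `s` with `s' = E`, `s'' = a E`
  set S : ℝ → ℝ := fun t => ∫ u in t0..t, E u with hSdef
  have hS : ∀ t ∈ I, HasDerivAt S (E t) t := by
    intro t ht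
    exact integral_hasDerivAt_right ((hEcontOn.mono (hsub t ht)).intervalIntegrable)
      (hEcontOn.stronglyMeasurableAtFilter hIopen t ht) (hEcont t ht)
  have hSst : ∀ t ∈ I, HasStrictDerivAt S (E t) t := by
    intro t ht
    have hder : ∀ᶠ y in 𝓝 t, HasDerivAt S (E y) y := by
      filter_upwards [hIopen.mem_nhds ht] with y hy using hS y hy
    exact hasStrictDerivAt_of_hasDerivAt_of_continuousAt hder (hEcont t ht)
  have hScont : ContinuousOn S I := fun t ht => (hS t ht).continuousAt.continuousWithinAt
  have hSmono : StrictMonoOn S I := by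
    apply strictMonoOn_of_deriv_pos hIconv hScont
    intro x hx
    rw [hIopen.interior_eq] at hx
    rw [(hS x hx).deriv]; exact hEpos x
  have hSinj : Set.InjOn S I := hSmono.injOn
  set J : Set ℝ := S '' I with hJdef
  set φ : ℝ → ℝ := Function.invFunOn S I with hφdef
  have hbij : Set.BijOn S I J := hSinj.bijOn_image
  have hinv : Set.InvOn φ S I J := hbij.invOn_invFunOn
  have hφbij : Set.BijOn φ J I := Set.BijOn.symm hinv.symm hbij
  have hφmem : ∀ q ∈ J, φ q ∈ I := fun q hq => hφbij.mapsTo hq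
  have hSφ : ∀ q ∈ J, S (φ q) = q := fun q hq => hinv.2 hq
  -- `J` is open
  have hJopen : IsOpen J := by
    rw [isOpen_iff_mem_nhds]
    rintro q ⟨t, ht, rfl⟩
    obtain ⟨ε, hε, hball⟩ := Metric.isOpen_iff.1 hIopen t ht
    have hIcc : Icc (t - ε / 2) (t + ε / 2) ⊆ I := fun x hx => hball (by
      rw [Metric.mem_ball, Real.dist_eq]
      rcases hx with ⟨h1, h2⟩
      rw [abs_lt]; constructor <;> linarith)
    have hle : t - ε / 2 ≤ t + ε / 2 := by linarith
    have hIVT : Ioo (S (t - ε / 2)) (S (t + ε / 2)) ⊆ S '' Ioo (t - ε / 2) (t + ε / 2) :=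
      intermediate_value_Ioo hle (hScont.mono hIcc)
    have hsubJ : S '' Ioo (t - ε / 2) (t + ε / 2) ⊆ J :=
      Set.image_mono (fun x hx => hIcc (Set.Ioo_subset_Icc_self hx))
    have hmemIoo : S t ∈ Ioo (S (t - ε / 2)) (S (t + ε / 2)) := by
      constructor
      · exact hSmono (hIcc ⟨le_refl _, hle⟩) ht (by linarith)
      · exact hSmono ht (hIcc ⟨hle, le_refl _⟩) (by linarith)
    exact Filter.mem_of_superset (isOpen_Ioo.mem_nhds hmemIoo) (hIVT.trans hsubJ)
  have hJconn : IsPreconnected J := hIconn.image S hScont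
  -- derivative of `φ`
  have hφderiv : ∀ q ∈ J, HasDerivAt φ ((E (φ q))⁻¹) q := by
    intro q hq
    set t := φ q with htdef
    have ht : t ∈ I := hφmem q hq
    have hq' : S t = q := hSφ q hq
    have hst := hSst t ht
    have hne : E t ≠ 0 := (hEpos t).ne'
    set g : ℝ → ℝ := HasStrictDerivAt.localInverse S (E t) t hst hne with hgdef
    have hg : HasStrictDerivAt g (E t)⁻¹ (S t) := hst.to_localInverse hne
    have h1 : ∀ᶠ y in 𝓝 (S t), S (g y) = y :=
      (hst.hasStrictFDerivAt_equiv hne).eventually_right_inverse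
    have h2 : ∀ᶠ y in 𝓝 (S t), g y ∈ I :=
      (hst.hasStrictFDerivAt_equiv hne).localInverse_tendsto (hIopen.mem_nhds ht)
    have h3 : ∀ᶠ y in 𝓝 (S t), y ∈ J := by rw [hq']; exact hJopen.mem_nhds hq
    have heq : φ =ᶠ[𝓝 (S t)] g := by
      filter_upwards [h1, h2, h3] with y e1 e2 e3
      exact hSinj (hφmem y e3) e2 ((hSφ y e3).trans e1.symm)
    have := hg.hasDerivAt.congr_of_eventuallyEq heq
    rwa [hq'] at this
  have hφd : ∀ q ∈ J, deriv φ q = (E (φ q))⁻¹ := fun q hq => (hφderiv q hq).deriv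
  have hφpos : ∀ q ∈ J, 0 < deriv φ q := by
    intro q hq; rw [hφd q hq]; exact inv_pos.2 (hEpos _)
  -- second derivative of `φ`
  have hφ2 : ∀ q ∈ J, HasDerivAt (deriv φ) (-(a (φ q)) * (deriv φ q) ^ 2) q := by
    intro q hq
    set t := φ q with htdef
    have ht : t ∈ I := hφmem q hq
    have hne : E t ≠ 0 := (hEpos t).ne'
    have hAφ : HasDerivAt (fun s => A (φ s)) (a t * (E t)⁻¹) q := by
      have := (hA t ht).comp q (hφderiv q hq)
      exact this
    have hEφ : HasDerivAt (fun s => E (φ s)) (E t * (a t * (E t)⁻¹)) q := hAφ.exp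
    have hψ : HasDerivAt (fun s => (E (φ s))⁻¹)
        (-(E t * (a t * (E t)⁻¹)) / (E (φ q)) ^ 2) q := hEφ.inv hne
    have heq : deriv φ =ᶠ[𝓝 q] fun s => (E (φ s))⁻¹ := by
      filter_upwards [hJopen.mem_nhds hq] with y hy using hφd y hy
    have := hψ.congr_of_eventuallyEq heq
    have hval : -(E t * (a t * (E t)⁻¹)) / (E (φ q)) ^ 2 = -(a (φ q)) * (deriv φ q) ^ 2 := by
      rw [hφd q hq]
      field_simp
      rfl
    rwa [hval] at this
  refine ⟨J, φ, hJopen, hJconn, hφbij, fun q hq =>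
    ⟨(hφderiv q hq).differentiableAt, (hφ2 q hq).differentiableAt, hφpos q hq⟩, ?_⟩
  -- the geodesic equation for `w = z ∘ φ`
  intro q hq α
  set t := φ q with htdef
  have ht : t ∈ I := hφmem q hq
  set c := deriv φ q with hcdef
  have hz1' : ∀ x ∈ I, ∀ β, HasDerivAt (fun s => z s β) (deriv z x β) x := fun x hx β =>
    (hasDerivAt_pi.1 (hz1 x hx).hasDerivAt) β
  have hz2' : ∀ β, HasDerivAt (fun s => deriv z s β) (deriv (deriv z) t β) t := fun β =>
    (hasDerivAt_pi.1 (hz2 t ht).hasDerivAt) β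
  -- first derivative of the components of `w`
  have hw1 : ∀ x ∈ J, ∀ β, HasDerivAt (fun r => z (φ r) β) (deriv z (φ x) β * deriv φ x) x := by
    intro x hx β
    exact (hz1' (φ x) (hφmem x hx) β).comp x (hφderiv x hx |>.congr_deriv (hφd x hx).symm)
  have hw1d : ∀ x ∈ J, ∀ β, deriv (fun r => z (φ r) β) x = deriv z (φ x) β * deriv φ x :=
    fun x hx β => (hw1 x hx β).deriv
  -- second derivative of the components of `w`
  have hG : HasDerivAt (fun s => deriv z (φ s) α * deriv φ s)
      (deriv (deriv z) t α * c * c + deriv z t α * (-(a t) * c ^ 2)) q := by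
    have h1 : HasDerivAt (fun s => deriv z (φ s) α) (deriv (deriv z) t α * c) q :=
      by exact (hz2' α).comp q (hφderiv q hq |>.congr_deriv (hφd q hq).symm)
    exact h1.mul (hφ2 q hq)
  have hF : HasDerivAt (fun s => deriv (fun r => z (φ r) α) s)
      (deriv (deriv z) t α * c * c + deriv z t α * (-(a t) * c ^ 2)) q := by
    apply hG.congr_of_eventuallyEq
    filter_upwards [hJopen.mem_nhds hq] with y hy using hw1d y hy α
  rw [hF.deriv]
  -- rewrite the sums using the chain rule
  have hsum : ∑ μ, ∑ β, Γ (z t) α μ β * deriv (fun r => z (φ r) μ) q *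
      deriv (fun r => z (φ r) β) q
      = (∑ μ, ∑ β, Γ (z t) α μ β * deriv z t μ * deriv z t β) * (c * c) := by
    rw [Finset.sum_mul]
    refine Finset.sum_congr rfl fun μ _ => ?_
    rw [Finset.sum_mul]
    refine Finset.sum_congr rfl fun β _ => ?_
    rw [hw1d q hq μ, hw1d q hq β]
    ring
  have hz2d : deriv (fun s => deriv z s α) t = deriv (deriv z) t α := (hz2' α).deriv
  have hpar' := hpar t ht α
  rw [hz2d] at hpar'
  have hΓ : ∑ μ, ∑ β, Γ (z t) α μ β * deriv z t μ * deriv z t β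
      = a t * deriv z t α - deriv (deriv z) t α := by linarith
  rw [hsum, hΓ]
  ring
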